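/- Let α, β be coprime integers with α odd, α > 1, β even, and 0 < |β| < α. Then there exists exactly one finite sequence [n_1, …, n_k] of nonzero even integers with cf[n_1, …, n_k] = β/α (the Seifert expansion of β/α). -/

import Mathlib

/-- The continued fraction value `cf [n_1, …, n_k] = 1/(n_1 + 1/(n_2 + ⋯ + 1/n_k))`. -/
def cf : List ℤ → ℚ
  | [] => 0
  | n :: L => 1 / ((n : ℚ) + cf L)

lemma two_le_abs_of_even_ne_zero {n : ℤ} (h0 : n ≠ 0) (he : Even n) : 2 ≤ |n| := by
  obtain ⟨k, rfl⟩ := he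
  have hk : k ≠ 0 := by rintro rfl; simp at h0
  have h1 : 1 ≤ |k| := Int.one_le_abs hk
  have : |k + k| = 2 * |k| := by rw [← two_mul, abs_mul]; norm_num
  linarith

lemma cf_abs_lt_one : ∀ L : List ℤ, (∀ n ∈ L, n ≠ 0 ∧ Even n) → |cf L| < 1
  | [], _ => by simp [cf]
  | n :: L, h => by
    have hn := h n List.mem_cons_self
    have ih := cf_abs_lt_one L (fun m hm => h m (List.mem_cons_of_mem _ hm))
    have h2 : (2 : ℚ) ≤ |(n : ℚ)| := by
      have := two_le_abs_of_even_ne_zero hn.1 hn.2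
      calc (2 : ℚ) = ((2 : ℤ) : ℚ) := by norm_num
        _ ≤ ((|n| : ℤ) : ℚ) := by exact_mod_cast this
        _ = |(n : ℚ)| := by push_cast; ring
    have hd : 1 < |(n : ℚ) + cf L| := by
      have := abs_add_le ((n : ℚ) + cf L) (-cf L)
      simp only [add_neg_cancel_right, abs_neg] at this
      linarith
    have hd0 : |(n : ℚ) + cf L| ≠ 0 := by positivity
    show |1 / ((n : ℚ) + cf L)| < 1
    rw [abs_div, abs_one, div_lt_one (by linarith)]
    exact hd

lemma cf_cons_denom (n : ℤ) (L : List ℤ) (h : ∀ m ∈ (n :: L), m ≠ 0 ∧ Even m) :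
    1 < |(n : ℚ) + cf L| := by
  have hn := h n List.mem_cons_self
  have ih := cf_abs_lt_one L (fun m hm => h m (List.mem_cons_of_mem _ hm))
  have h2 : (2 : ℚ) ≤ |(n : ℚ)| := by
    have := two_le_abs_of_even_ne_zero hn.1 hn.2
    calc (2 : ℚ) = ((2 : ℤ) : ℚ) := by norm_num
      _ ≤ ((|n| : ℤ) : ℚ) := by exact_mod_cast this
      _ = |(n : ℚ)| := by push_cast; ring
  have := abs_add_le ((n : ℚ) + cf L) (-cf L)
  simp only [add_neg_cancel_right, abs_neg] at this
  linarith

lemma cf_ne_zero {L : List ℤ} (h : ∀ m ∈ L, m ≠ 0 ∧ Even m) (hne : L ≠ []) :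
    cf L ≠ 0 := by
  cases L with
  | nil => exact absurd rfl hne
  | cons n M =>
    have hd := cf_cons_denom n M h
    have : (n : ℚ) + cf M ≠ 0 := by
      intro h0; rw [h0, abs_zero] at hd; linarith
    show 1 / ((n : ℚ) + cf M) ≠ 0
    exact one_div_ne_zero this

lemma cf_injective : ∀ L L' : List ℤ, (∀ m ∈ L, m ≠ 0 ∧ Even m) →
    (∀ m ∈ L', m ≠ 0 ∧ Even m) → cf L = cf L' → L = L' := by
  intro L
  induction L with
  | nil =>
    intro L' _ h' heq
    cases L' with
    | nil => rfl
    | cons n M => exact absurd heq.symm (cf_ne_zero h' (by simp))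
  | cons n M ih =>
    intro L' h h' heq
    cases L' with
    | nil => exact absurd heq (cf_ne_zero h (by simp))
    | cons n' M' =>
      have hd := cf_cons_denom n M h
      have hd' := cf_cons_denom n' M' h'
      have hx : (n : ℚ) + cf M ≠ 0 := by intro h0; rw [h0, abs_zero] at hd; linarith
      have hy : (n' : ℚ) + cf M' ≠ 0 := by intro h0; rw [h0, abs_zero] at hd'; linarith
      have heq2 : (n : ℚ) + cf M = (n' : ℚ) + cf M' := by
        have : ((n : ℚ) + cf M)⁻¹ = ((n' : ℚ) + cf M')⁻¹ := by
          rw [← one_div, ← one_div]; exact heq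
        exact inv_injective this
      have hM := cf_abs_lt_one M (fun m hm => h m (List.mem_cons_of_mem _ hm))
      have hM' := cf_abs_lt_one M' (fun m hm => h' m (List.mem_cons_of_mem _ hm))
      have hnn' : n = n' := by
        have hdiff : |(n : ℚ) - (n' : ℚ)| < 2 := by
          have : (n : ℚ) - (n' : ℚ) = cf M' - cf M := by linarith
          rw [this]
          calc |cf M' - cf M| ≤ |cf M'| + |cf M| := abs_sub _ _
            _ < 2 := by linarith
        have hdiffZ : |n - n'| < 2 := by
          have : |((n - n' : ℤ) : ℚ)| < 2 := by push_cast; exact hdiff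
          exact_mod_cast (by rwa [← Int.cast_abs] at this; : ((|n - n'| : ℤ) : ℚ) < 2)
        have he : Even (n - n') :=
          (h n (by simp)).2.sub (h' n' (by simp)).2
        rw [abs_lt] at hdiffZ
        obtain ⟨k, hk⟩ := he
        omega
      subst hnn'
      have : cf M = cf M' := by linarith
      rw [ih M' (fun m hm => h m (List.mem_cons_of_mem _ hm))
        (fun m hm => h' m (List.mem_cons_of_mem _ hm)) this]

lemma exists_even_close (a b : ℤ) (ha : a ≠ 0) (hpar : Odd (a + b)) :
    ∃ n : ℤ, Even n ∧ |b - n * a| < |a| := by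
  have habs : 0 < |a| := abs_pos.mpr ha
  set d : ℤ := 2 * |a| with hd
  have hd0 : 0 < d := by positivity
  set r : ℤ := b % d with hrdef
  have hr0 : 0 ≤ r := Int.emod_nonneg b (by omega)
  have hrd : r < d := Int.emod_lt_of_pos b hd0
  have hb : d * (b / d) + r = b := Int.mul_ediv_add_emod b d
  have hs : a.sign * a = |a| := by
    rcases ha.lt_or_gt with h | h
    · rw [Int.sign_eq_neg_one_of_neg h, abs_of_neg h]; ring
    · rw [Int.sign_eq_one_of_pos h, abs_of_pos h]; ring
  set n : ℤ := 2 * (b / d) * a.sign with hn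
  have hna : n * a = b - r := by
    calc n * a = (b / d) * (2 * (a.sign * a)) := by rw [hn]; ring
      _ = (b / d) * d := by rw [hs, hd]
      _ = b - r := by linarith
  have heven : Even n := ⟨(b / d) * a.sign, by rw [hn]; ring⟩
  rcases lt_trichotomy r |a| with h | h | h
  · refine ⟨n, heven, ?_⟩
    have : b - n * a = r := by linarith
    rw [this, abs_of_nonneg hr0]; exact h
  · exfalso
    have hb' : b = n * a + |a| := by rw [← h]; linarith
    have h1 : Even (a + |a|) := by
      rcases le_or_gt 0 a with h2 | h2
      · rw [abs_of_nonneg h2]; exact ⟨a, rfl⟩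
      · rw [abs_of_neg h2]; simp
    have h2 : Even (a + b) := by
      have : a + b = (a + |a|) + n * a := by rw [hb']; ring
      rw [this]
      exact h1.add (heven.mul_right a)
    exact (Int.not_odd_iff_even.mpr h2) hpar
  · refine ⟨n + 2 * a.sign, heven.add ⟨a.sign, by ring⟩, ?_⟩
    have h2 : (n + 2 * a.sign) * a = b - r + d := by
      have : (n + 2 * a.sign) * a = n * a + 2 * (a.sign * a) := by ring
      rw [this, hs, hna, hd]
    have h3 : b - (n + 2 * a.sign) * a = r - d := by rw [h2]; ring
    rw [h3, abs_of_neg (by linarith)]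
    linarith

lemma cf_exists : ∀ b : ℕ, ∀ a : ℤ, |a| < (b : ℤ) → IsCoprime a (b : ℤ) →
    Odd (a + (b : ℤ)) →
    ∃ L, (∀ m ∈ L, m ≠ 0 ∧ Even m) ∧ cf L = (a : ℚ) / ((b : ℕ) : ℚ) := by
  intro b
  induction b using Nat.strong_induction_on with
  | _ b ih =>
    intro a hab hcop hpar
    have hb0 : 0 < (b : ℤ) := lt_of_le_of_lt (abs_nonneg a) hab
    rcases eq_or_ne a 0 with rfl | ha
    · have hu : IsUnit ((b : ℤ)) := isCoprime_zero_left.mp hcop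
      have hb1 : (b : ℤ) = 1 := by
        rcases Int.isUnit_iff.mp hu with h | h
        · exact h
        · omega
      have hb1' : b = 1 := by exact_mod_cast hb1
      exact ⟨[], by simp, by simp [cf, hb1']⟩
    · obtain ⟨n, hne, hclose⟩ := exists_even_close a b ha hpar
      set r : ℤ := (b : ℤ) - n * a with hrdef
      have hn0 : n ≠ 0 := by
        rintro rfl
        simp only [zero_mul, sub_zero] at hrdef
        rw [hrdef, abs_of_pos hb0] at hclose
        linarith
      have haQ : (a : ℚ) ≠ 0 := Int.cast_ne_zero.mpr ha
      have hbQ : ((b : ℕ) : ℚ) ≠ 0 := by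
        intro h0; rw [Nat.cast_eq_zero] at h0; omega
      have hbna : ((b : ℕ) : ℚ) = (n : ℚ) * (a : ℚ) + (r : ℚ) := by
        rw [hrdef]; push_cast; ring
      rcases eq_or_ne r 0 with hr0 | hr0
      · -- b = n * a, so a is a unit
        have hdvd : a ∣ (b : ℤ) := ⟨n, by rw [mul_comm]; linarith⟩
        have hu : IsUnit a := hcop.isUnit_of_dvd hdvd
        refine ⟨[n], by simp [hn0, hne], ?_⟩
        show 1 / ((n : ℚ) + cf []) = (a : ℚ) / ((b : ℕ) : ℚ)
        rw [show cf [] = 0 from rfl, add_zero, hbna, hr0]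
        rcases Int.isUnit_iff.mp hu with h | h <;> subst h <;>
          push_cast <;> field_simp <;> simp [hn0]
      · -- recurse
        have hcop' : IsCoprime r a := by
          have h1 : IsCoprime ((b : ℤ) + a * (-n)) a := hcop.symm.add_mul_left_left (-n)
          have : (b : ℤ) + a * (-n) = r := by rw [hrdef]; ring
          rwa [this] at h1
        have hden : a.natAbs < b := by
          have : (a.natAbs : ℤ) < (b : ℤ) := by rwa [← Int.abs_eq_natAbs]
          exact_mod_cast this
        have hrabs : |r| < |a| := hclose
        obtain ⟨k, hk⟩ := hne
        obtain ⟨m, hm⟩ := hpar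
        rcases ha.lt_or_gt with hneg | hpos
        · -- a < 0 : numerator -r, denominator (-a) = a.natAbs
          have h1 : (a.natAbs : ℤ) = -a := Int.ofNat_natAbs_of_nonpos (le_of_lt hneg)
          have hab' : |(-r)| < (a.natAbs : ℤ) := by
            rw [abs_neg, h1, ← abs_of_neg hneg]; exact hrabs
          have hcop'' : IsCoprime (-r) ((a.natAbs : ℤ)) := by
            rw [h1]; exact hcop'.neg_left.neg_right
          have hpar' : Odd ((-r) + (a.natAbs : ℤ)) := by
            refine ⟨k * a - m - 1, ?_⟩
            rw [h1, hrdef, hk] at *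
            ring_nf
            ring_nf at hm
            linarith [hm]
          obtain ⟨L', hL', hval'⟩ := ih a.natAbs hden (-r) hab' hcop'' hpar'
          refine ⟨n :: L', ?_, ?_⟩
          · intro x hx
            rcases List.mem_cons.mp hx with rfl | hx
            · exact ⟨hn0, ⟨k, hk⟩⟩
            · exact hL' x hx
          · show 1 / ((n : ℚ) + cf L') = (a : ℚ) / ((b : ℕ) : ℚ)
            have hcast : ((a.natAbs : ℕ) : ℚ) = -(a : ℚ) := by
              rw [← Int.cast_natCast (R := ℚ), h1, Int.cast_neg]
            rw [hval', hcast]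
            have : ((-r : ℤ) : ℚ) / (-(a : ℚ)) = (r : ℚ) / (a : ℚ) := by
              push_cast; rw [neg_div_neg_eq]
            rw [this]
            have hden2 : (n : ℚ) + (r : ℚ) / (a : ℚ) = ((b : ℕ) : ℚ) / (a : ℚ) := by
              rw [hbna]; field_simp
            rw [hden2, one_div_div]
        · -- a > 0
          have h1 : (a.natAbs : ℤ) = a := Int.natAbs_of_nonneg (le_of_lt hpos)
          have hab' : |r| < (a.natAbs : ℤ) := by
            rw [h1, ← abs_of_pos hpos]; exact hrabs
          have hcop'' : IsCoprime r ((a.natAbs : ℤ)) := by rw [h1]; exact hcop'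
          have hpar' : Odd (r + (a.natAbs : ℤ)) := by
            refine ⟨m - k * a, ?_⟩
            rw [h1, hrdef, hk] at *
            ring_nf
            ring_nf at hm
            linarith [hm]
          obtain ⟨L', hL', hval'⟩ := ih a.natAbs hden r hab' hcop'' hpar'
          refine ⟨n :: L', ?_, ?_⟩
          · intro x hx
            rcases List.mem_cons.mp hx with rfl | hx
            · exact ⟨hn0, ⟨k, hk⟩⟩
            · exact hL' x hx
          · show 1 / ((n : ℚ) + cf L') = (a : ℚ) / ((b : ℕ) : ℚ)
            have hcast : ((a.natAbs : ℕ) : ℚ) = (a : ℚ) := by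
              rw [← Int.cast_natCast (R := ℚ), h1]
            rw [hval', hcast]
            have hden2 : (n : ℚ) + (r : ℚ) / (a : ℚ) = ((b : ℕ) : ℚ) / (a : ℚ) := by
              rw [hbna]; field_simp
            rw [hden2, one_div_div]

/-- For `α` odd, `α > 1`, `β` even, `0 < |β| < α`, and `gcd(α,β) = 1`, there is exactly
one finite sequence of nonzero even integers whose continued fraction value is `β/α`
(the Seifert expansion). -/
theorem seifert_expansion_unique (α β : ℤ) (hα1 : 1 < α) (hαodd : Odd α)
    (hβeven : Even β) (hβ0 : 0 < |β|) (hβα : |β| < α) (hcop : IsCoprime α β) :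
    ∃! L : List ℤ, (∀ n ∈ L, n ≠ 0 ∧ Even n) ∧ cf L = (β : ℚ) / (α : ℚ) := by
  have hα0 : (0 : ℤ) < α := by linarith
  have hcast : ((α.toNat : ℕ) : ℤ) = α := Int.toNat_of_nonneg (le_of_lt hα0)
  have hab : |β| < ((α.toNat : ℕ) : ℤ) := by rwa [hcast]
  have hcop' : IsCoprime β ((α.toNat : ℕ) : ℤ) := by rw [hcast]; exact hcop.symm
  have hpar : Odd (β + ((α.toNat : ℕ) : ℤ)) := by
    rw [hcast]
    exact hβeven.add_odd hαodd
  obtain ⟨L, hL, hval⟩ := cf_exists α.toNat β hab hcop' hpar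
  have hcastQ : ((α.toNat : ℕ) : ℚ) = (α : ℚ) := by exact_mod_cast hcast
  rw [hcastQ] at hval
  refine ⟨L, ⟨hL, hval⟩, ?_⟩
  rintro L' ⟨hL', hval'⟩
  exact cf_injective L' L hL' hL (hval'.trans hval.symm)
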